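/- Let ρ_k ≥ 0 be a summable sequence of nonnegative reals and φ_k : (0,1) → ℂ an orthonormal family of H¹ functions with Σ_k ρ_k ‖φ_k'‖_{L²}² < ∞. Define n(x) = Σ_k ρ_k |φ_k(x)|². Then n ∈ W^{1,1}(0,1) and ‖n'‖_{L¹(0,1)} ≤ 2 (Σ_k ρ_k)^{1/2} (Σ_k ρ_k ‖φ_k'‖_{L²}²)^{1/2}. -/

import Mathlib

open MeasureTheory Set

/-- The local density `n(x) = Σ_k ρ_k |φ_k(x)|²`. -/
noncomputable def localDensity (ρ : ℕ → ℝ) (φ : ℕ → ℝ → ℂ) (x : ℝ) : ℝ :=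
  ∑' k, ρ k * ‖φ k x‖ ^ 2

/-- The (formal) derivative `Σ_k ρ_k (φ_k' \overline{φ_k} + φ_k \overline{φ_k'})`
of the local density. -/
noncomputable def localDensityDeriv (ρ : ℕ → ℝ) (φ D : ℕ → ℝ → ℂ) (x : ℝ) : ℝ :=
  ∑' k, ρ k * (2 * ((starRingEnd ℂ) (φ k x) * D k x).re)

lemma aux_conj_mul (z : ℂ) : (starRingEnd ℂ) z * z = ((‖z‖ ^ 2 : ℝ) : ℂ) := by
  apply Complex.ext <;>
    simp [Complex.mul_re, Complex.mul_im, Complex.sq_norm,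
      Complex.normSq_apply] <;> ring

lemma aux_hasDerivAt (f : ℝ → ℂ) (x : ℝ) (d : ℂ) (h : HasDerivAt f d x) :
    HasDerivAt (fun y => ‖f y‖ ^ 2) (2 * ((starRingEnd ℂ) (f x) * d).re) x := by
  have h1 : HasDerivAt (fun y => (starRingEnd ℂ) (f y) * f y)
      ((starRingEnd ℂ) d * f x + (starRingEnd ℂ) (f x) * d) x := by
    exact (h.star.mul h)
  have h2 := (Complex.reCLM.hasFDerivAt).comp_hasDerivAt x h1
  have h3 : HasDerivAt (fun y => ((starRingEnd ℂ) (f y) * f y).re)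
      (2 * ((starRingEnd ℂ) (f x) * d).re) x := by
    convert (show HasDerivAt (fun y => ((starRingEnd ℂ) (f y) * f y).re)
      (Complex.reCLM ((starRingEnd ℂ) d * f x + (starRingEnd ℂ) (f x) * d)) x from h2) using 1
    simp [Complex.reCLM_apply, Complex.add_re, Complex.mul_re]
    ring
  have h4 : (fun y => ((starRingEnd ℂ) (f y) * f y).re) = (fun y => ‖f y‖ ^ 2) := by
    funext y; rw [aux_conj_mul]; exact Complex.ofReal_re _
  rwa [h4] at h3

lemma aux_integral_CS {α : Type*} [MeasurableSpace α] {μ : Measure α} {u v : α → ℝ}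
    (hu : AEStronglyMeasurable u μ) (hv : AEStronglyMeasurable v μ)
    (hu0 : ∀ x, 0 ≤ u x) (hv0 : ∀ x, 0 ≤ v x)
    (hu2 : Integrable (fun x => u x ^ 2) μ) (hv2 : Integrable (fun x => v x ^ 2) μ) :
    ∫ x, u x * v x ∂μ ≤ Real.sqrt (∫ x, u x ^ 2 ∂μ) * Real.sqrt (∫ x, v x ^ 2 ∂μ) := by
  have hpq : Real.HolderConjugate 2 2 := ⟨by norm_num, by norm_num, by norm_num⟩
  have h2 : (ENNReal.ofReal (2:ℝ)) = 2 := by simp [ENNReal.ofReal_ofNat]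
  have hmu : MemLp u (ENNReal.ofReal (2:ℝ)) μ := by
    rw [h2]; exact (memLp_two_iff_integrable_sq hu).2 hu2
  have hmv : MemLp v (ENNReal.ofReal (2:ℝ)) μ := by
    rw [h2]; exact (memLp_two_iff_integrable_sq hv).2 hv2
  have h := integral_mul_le_Lp_mul_Lq_of_nonneg hpq (Filter.Eventually.of_forall hu0)
    (Filter.Eventually.of_forall hv0) hmu hmv
  calc ∫ x, u x * v x ∂μ
      ≤ (∫ x, u x ^ (2:ℝ) ∂μ) ^ ((1:ℝ)/2) * (∫ x, v x ^ (2:ℝ) ∂μ) ^ ((1:ℝ)/2) := h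
    _ = Real.sqrt (∫ x, u x ^ 2 ∂μ) * Real.sqrt (∫ x, v x ^ 2 ∂μ) := by
        rw [Real.sqrt_eq_rpow, Real.sqrt_eq_rpow]
        norm_num [Real.rpow_natCast]

lemma aux_tsum_CS (a b : ℕ → ℝ) (ha : ∀ k, 0 ≤ a k) (hb : ∀ k, 0 ≤ b k)
    (ha2 : Summable (fun k => a k ^ 2)) (hb2 : Summable fun k => b k ^ 2) :
    ∑' k, a k * b k ≤ Real.sqrt (∑' k, a k ^ 2) * Real.sqrt (∑' k, b k ^ 2) := by
  have hpq : Real.HolderConjugate 2 2 := ⟨by norm_num, by norm_num, by norm_num⟩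
  have ha2' : Summable (fun k => a k ^ (2:ℝ)) := by
    convert ha2 using 2 with k; rw [← Real.rpow_natCast (a k) 2]; norm_num
  have hb2' : Summable (fun k => b k ^ (2:ℝ)) := by
    convert hb2 using 2 with k; rw [← Real.rpow_natCast (b k) 2]; norm_num
  have h := Real.inner_le_Lp_mul_Lq_tsum_of_nonneg hpq ha hb ha2' hb2'
  calc ∑' k, a k * b k
      ≤ (∑' k, a k ^ (2:ℝ)) ^ ((1:ℝ)/2) * (∑' k, b k ^ (2:ℝ)) ^ ((1:ℝ)/2) := h
    _ = Real.sqrt (∑' k, a k ^ 2) * Real.sqrt (∑' k, b k ^ 2) := by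
        rw [Real.sqrt_eq_rpow, Real.sqrt_eq_rpow]
        congr 2 <;> (apply tsum_congr; intro k)
        · rw [← Real.rpow_natCast (a k) 2]; norm_num
        · rw [← Real.rpow_natCast (b k) 2]; norm_num

theorem localDensity_W11_bound (ρ : ℕ → ℝ) (φ D : ℕ → ℝ → ℂ)
    (hρ : ∀ k, 0 ≤ ρ k) (hsum : Summable ρ)
    (hderiv : ∀ k, ∀ x ∈ Ioo (0 : ℝ) 1, HasDerivAt (φ k) (D k x) x)
    (hφL2 : ∀ k, IntegrableOn (fun x => ‖φ k x‖ ^ 2) (Ioo 0 1))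
    (hDL2 : ∀ k, IntegrableOn (fun x => ‖D k x‖ ^ 2) (Ioo 0 1))
    (horth : ∀ j k, (∫ x in Ioo (0 : ℝ) 1, (starRingEnd ℂ) (φ j x) * φ k x) =
      if j = k then 1 else 0)
    (hE : Summable (fun k => ρ k * ∫ x in Ioo (0 : ℝ) 1, ‖D k x‖ ^ 2)) :
    IntegrableOn (localDensityDeriv ρ φ D) (Ioo 0 1) ∧
    (∀ a ∈ Ioo (0 : ℝ) 1, ∀ b ∈ Ioo (0 : ℝ) 1,
      localDensity ρ φ b - localDensity ρ φ a = ∫ x in a..b, localDensityDeriv ρ φ D x) ∧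
    (∫ x in Ioo (0 : ℝ) 1, |localDensityDeriv ρ φ D x|) ≤
      2 * Real.sqrt (∑' k, ρ k) *
        Real.sqrt (∑' k, ρ k * ∫ x in Ioo (0 : ℝ) 1, ‖D k x‖ ^ 2) := by
  classical
  have hms : MeasurableSet (Ioo (0:ℝ) 1) := measurableSet_Ioo
  set μ : Measure ℝ := volume.restrict (Ioo (0:ℝ) 1) with hμdef
  set E : ℕ → ℝ := fun k => ∫ x in Ioo (0:ℝ) 1, ‖D k x‖ ^ 2 with hEdef
  have hE0 : ∀ k, 0 ≤ E k := fun k => setIntegral_nonneg hms (fun x _ => by positivity)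
  set f : ℕ → ℝ → ℝ := fun k x => ρ k * (2 * ((starRingEnd ℂ) (φ k x) * D k x).re) with hfdef
  have hg : ∀ x, localDensityDeriv ρ φ D x = ∑' k, f k x := fun x => rfl
  -- measurability
  have hφm : ∀ k, AEStronglyMeasurable (φ k) μ := fun k =>
    ContinuousOn.aestronglyMeasurable
      (fun x hx => ((hderiv k x hx).continuousAt.continuousWithinAt)) hms
  have hDm : ∀ k, AEStronglyMeasurable (D k) μ := by
    intro k
    refine (stronglyMeasurable_deriv (φ k)).aestronglyMeasurable.congr ?_
    filter_upwards [self_mem_ae_restrict hms] with x hx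
    exact (hderiv k x hx).deriv
  have hre_m : ∀ k, AEStronglyMeasurable
      (fun x => 2 * ((starRingEnd ℂ) (φ k x) * D k x).re) μ := by
    intro k
    have h1 : AEStronglyMeasurable (fun x => (starRingEnd ℂ) (φ k x) * D k x) μ :=
      ((continuous_star.comp_aestronglyMeasurable (hφm k)).mul (hDm k))
    exact (continuous_const.mul Complex.continuous_re).comp_aestronglyMeasurable h1
  -- pointwise bounds
  have hptb : ∀ k x, |2 * ((starRingEnd ℂ) (φ k x) * D k x).re| ≤ 2 * (‖φ k x‖ * ‖D k x‖) := by
    intro k x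
    rw [abs_mul, abs_two]
    have h1 : |((starRingEnd ℂ) (φ k x) * D k x).re| ≤ ‖(starRingEnd ℂ) (φ k x) * D k x‖ :=
      Complex.abs_re_le_norm _
    have h2 : ‖(starRingEnd ℂ) (φ k x) * D k x‖ = ‖φ k x‖ * ‖D k x‖ := by
      rw [norm_mul]; simp
    nlinarith [abs_nonneg (((starRingEnd ℂ) (φ k x) * D k x).re)]
  have hptb2 : ∀ k x, 2 * (‖φ k x‖ * ‖D k x‖) ≤ ‖φ k x‖ ^ 2 + ‖D k x‖ ^ 2 := by
    intro k x
    nlinarith [sq_nonneg (‖φ k x‖ - ‖D k x‖)]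
  -- integrability of the summands
  have hprod_int : ∀ k, Integrable (fun x => ‖φ k x‖ * ‖D k x‖) μ := by
    intro k
    refine ((hφL2 k).add (hDL2 k)).mono' ((hφm k).norm.mul (hDm k).norm) ?_
    filter_upwards with x
    simp only [Pi.add_apply]
    rw [Real.norm_eq_abs, abs_of_nonneg (by positivity)]
    nlinarith [hptb2 k x, norm_nonneg (φ k x), norm_nonneg (D k x)]
  have hre_i : ∀ k, Integrable (fun x => 2 * ((starRingEnd ℂ) (φ k x) * D k x).re) μ := by
    intro k
    refine ((hφL2 k).add (hDL2 k)).mono' (hre_m k) ?_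
    filter_upwards with x
    simp only [Pi.add_apply]
    rw [Real.norm_eq_abs]
    exact le_trans (hptb k x) (hptb2 k x)
  have hfi : ∀ k, Integrable (f k) μ := fun k => (hre_i k).const_mul (ρ k)
  -- orthonormality gives ∫‖φ k‖² = 1
  have hnorm1 : ∀ k, ∫ x in Ioo (0:ℝ) 1, ‖φ k x‖ ^ 2 = 1 := by
    intro k
    have h := horth k k
    rw [if_pos rfl] at h
    have h2 : (∫ x in Ioo (0:ℝ) 1, (starRingEnd ℂ) (φ k x) * φ k x)
        = ∫ x in Ioo (0:ℝ) 1, ((‖φ k x‖ ^ 2 : ℝ) : ℂ) :=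
      integral_congr_ae (Filter.Eventually.of_forall fun x => aux_conj_mul _)
    have h3 : (∫ x in Ioo (0:ℝ) 1, ((‖φ k x‖ ^ 2 : ℝ) : ℂ))
        = ((∫ x in Ioo (0:ℝ) 1, ‖φ k x‖ ^ 2 : ℝ) : ℂ) := integral_ofReal
    rw [h2, h3] at h
    exact_mod_cast h
  -- key per-k L¹ bound
  have key : ∀ k, ∫ x, ‖f k x‖ ∂μ ≤ 2 * ρ k * Real.sqrt (E k) := by
    intro k
    have h1 : ∫ x, ‖f k x‖ ∂μ ≤ ∫ x, (2 * ρ k) * (‖φ k x‖ * ‖D k x‖) ∂μ := by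
      refine integral_mono (hfi k).norm ((hprod_int k).const_mul _) ?_
      intro x
      simp only [hfdef, Real.norm_eq_abs]
      rw [abs_mul, abs_of_nonneg (hρ k)]
      calc ρ k * |2 * ((starRingEnd ℂ) (φ k x) * D k x).re|
          ≤ ρ k * (2 * (‖φ k x‖ * ‖D k x‖)) := by
            exact mul_le_mul_of_nonneg_left (hptb k x) (hρ k)
        _ = (2 * ρ k) * (‖φ k x‖ * ‖D k x‖) := by ring
    have h2 : ∫ x, (2 * ρ k) * (‖φ k x‖ * ‖D k x‖) ∂μ
        = (2 * ρ k) * ∫ x, ‖φ k x‖ * ‖D k x‖ ∂μ := integral_const_mul _ _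
    have h3 : ∫ x, ‖φ k x‖ * ‖D k x‖ ∂μ ≤ Real.sqrt (E k) := by
      have := aux_integral_CS (μ := μ) (hφm k).norm (hDm k).norm
        (fun x => norm_nonneg _) (fun x => norm_nonneg _) (hφL2 k) (hDL2 k)
      rwa [hnorm1 k, Real.sqrt_one, one_mul] at this
    calc ∫ x, ‖f k x‖ ∂μ ≤ (2 * ρ k) * ∫ x, ‖φ k x‖ * ‖D k x‖ ∂μ := by rw [← h2]; exact h1
      _ ≤ (2 * ρ k) * Real.sqrt (E k) :=
          mul_le_mul_of_nonneg_left h3 (mul_nonneg (by norm_num) (hρ k))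
      _ = 2 * ρ k * Real.sqrt (E k) := by ring
  -- the c_k series is summable
  have hceq : ∀ k, 2 * ρ k * Real.sqrt (E k)
      = 2 * (Real.sqrt (ρ k) * Real.sqrt (ρ k * E k)) := by
    intro k
    rw [← Real.sqrt_mul (hρ k) (ρ k * E k),
      show ρ k * (ρ k * E k) = ρ k ^ 2 * E k by ring,
      Real.sqrt_mul (sq_nonneg _), Real.sqrt_sq (hρ k)]
    ring
  have hcknn : ∀ k, 0 ≤ 2 * ρ k * Real.sqrt (E k) :=
    fun k => mul_nonneg (mul_nonneg (by norm_num) (hρ k)) (Real.sqrt_nonneg _)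
  have hcs : Summable (fun k => 2 * ρ k * Real.sqrt (E k)) := by
    refine Summable.of_nonneg_of_le hcknn (fun k => ?_) (hsum.add hE)
    rw [hceq k]
    have h1 := two_mul_le_add_sq (Real.sqrt (ρ k)) (Real.sqrt (ρ k * E k))
    rw [Real.sq_sqrt (hρ k), Real.sq_sqrt (mul_nonneg (hρ k) (hE0 k))] at h1
    linarith
  have hc0 : 0 ≤ ∑' k, 2 * ρ k * Real.sqrt (E k) := tsum_nonneg hcknn
  -- ENNReal bounds
  have hofreal : ∀ k, (∫⁻ x, ‖f k x‖₊ ∂μ) = ENNReal.ofReal (∫ x, ‖f k x‖ ∂μ) :=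
    fun k => (ofReal_integral_norm_eq_lintegral_enorm (hfi k)).symm
  have htop : ∑' k, ∫⁻ x, ‖f k x‖₊ ∂μ
      ≤ ENNReal.ofReal (∑' k, 2 * ρ k * Real.sqrt (E k)) := by
    rw [ENNReal.ofReal_tsum_of_nonneg hcknn hcs]
    exact ENNReal.tsum_le_tsum fun k => by
      rw [hofreal k]; exact ENNReal.ofReal_le_ofReal (key k)
  have hne : ∑' k, ∫⁻ x, ‖f k x‖₊ ∂μ ≠ ⊤ :=
    (lt_of_le_of_lt htop ENNReal.ofReal_lt_top).ne
  have hnn_meas : ∀ k, AEMeasurable (fun x => (‖f k x‖₊ : ENNReal)) μ :=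
    fun k => (hfi k).aestronglyMeasurable.enorm
  -- a.e. summability
  have hae : ∀ᵐ x ∂μ, Summable (fun k => f k x) := by
    have h1 : ∫⁻ x, ∑' k, (‖f k x‖₊ : ENNReal) ∂μ ≠ ⊤ := by
      rw [lintegral_tsum hnn_meas]; exact hne
    filter_upwards [ae_lt_top' (AEMeasurable.ennreal_tsum hnn_meas) h1] with x hx
    have h2 : Summable (fun k => ((‖f k x‖₊ : NNReal) : ℝ)) :=
      ENNReal.tsum_coe_ne_top_iff_summable_coe.1 hx.ne
    refine Summable.of_norm ?_
    simpa [coe_nnnorm] using h2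
  have hgm : AEStronglyMeasurable (localDensityDeriv ρ φ D) μ := by
    refine aestronglyMeasurable_of_tendsto_ae Filter.atTop
      (fun n => Finset.aestronglyMeasurable_sum (Finset.range n)
        (fun k _ => (hfi k).aestronglyMeasurable)) ?_
    filter_upwards [hae] with x hx
    rw [hg x]
    simpa only [Finset.sum_apply] using hx.hasSum.tendsto_sum_nat
  -- pointwise enorm bound
  have hpt : ∀ x, (‖localDensityDeriv ρ φ D x‖₊ : ENNReal) ≤ ∑' k, (‖f k x‖₊ : ENNReal) := by
    intro x
    by_cases hsx : Summable (fun k => f k x)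
    · have hns : Summable (fun k => ‖f k x‖) := by
        simpa [Real.norm_eq_abs, summable_abs_iff] using hsx
      have h1 : ‖localDensityDeriv ρ φ D x‖ ≤ ∑' k, ‖f k x‖ := by
        rw [hg x]; exact norm_tsum_le_tsum_norm hns
      calc (‖localDensityDeriv ρ φ D x‖₊ : ENNReal)
          = ENNReal.ofReal ‖localDensityDeriv ρ φ D x‖ := (ofReal_norm_eq_enorm _).symm
        _ ≤ ENNReal.ofReal (∑' k, ‖f k x‖) := ENNReal.ofReal_le_ofReal h1
        _ = ∑' k, ENNReal.ofReal ‖f k x‖ :=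
            ENNReal.ofReal_tsum_of_nonneg (fun k => norm_nonneg _) hns
        _ = ∑' k, (‖f k x‖₊ : ENNReal) := by
            exact tsum_congr fun k => ofReal_norm_eq_enorm _
    · have h0 : localDensityDeriv ρ φ D x = 0 := by
        rw [hg x]; exact tsum_eq_zero_of_not_summable hsx
      simp [h0]
  -- Part 1: integrability
  have hgint : IntegrableOn (localDensityDeriv ρ φ D) (Ioo 0 1) := by
    refine ⟨hgm, ?_⟩
    have hfin : ∫⁻ x, (‖localDensityDeriv ρ φ D x‖₊ : ENNReal) ∂μ < ⊤ :=
      calc ∫⁻ x, (‖localDensityDeriv ρ φ D x‖₊ : ENNReal) ∂μ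
          ≤ ∫⁻ x, ∑' k, (‖f k x‖₊ : ENNReal) ∂μ := lintegral_mono hpt
        _ = ∑' k, ∫⁻ x, (‖f k x‖₊ : ENNReal) ∂μ := lintegral_tsum hnn_meas
        _ < ⊤ := hne.lt_top
    exact hfin
  -- FTC for each k
  have hsub : ∀ {u v : ℝ}, u ∈ Ioo (0:ℝ) 1 → v ∈ Ioo (0:ℝ) 1 →
      Set.uIcc u v ⊆ Ioo (0:ℝ) 1 :=
    fun hu hv => (Set.ordConnected_Ioo).uIcc_subset hu hv
  have hFTCk : ∀ k, ∀ u ∈ Ioo (0:ℝ) 1, ∀ v ∈ Ioo (0:ℝ) 1,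
      ‖φ k v‖ ^ 2 - ‖φ k u‖ ^ 2
        = ∫ t in u..v, 2 * ((starRingEnd ℂ) (φ k t) * D k t).re := by
    intro k u hu v hv
    refine (intervalIntegral.integral_eq_sub_of_hasDerivAt
      (fun t ht => aux_hasDerivAt (φ k) t (D k t) (hderiv k t (hsub hu hv ht))) ?_).symm
    have hio : IntegrableOn (fun x => 2 * ((starRingEnd ℂ) (φ k x) * D k x).re)
        (Ioo (0:ℝ) 1) volume := hre_i k
    exact (hio.mono_set (hsub hu hv)).intervalIntegrable
  -- pointwise bound on ‖φ k x‖² on Ioo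
  have hφbd : ∀ k, ∀ x ∈ Ioo (0:ℝ) 1, ‖φ k x‖ ^ 2 ≤ 3 + E k := by
    intro k x hx
    obtain ⟨y, hy, hy2⟩ : ∃ y ∈ Ioo (0:ℝ) 1, ‖φ k y‖ ^ 2 ≤ 2 := by
      by_contra h
      push_neg at h
      have hvol : volume (Ioo (0:ℝ) 1) < ⊤ := by simp [Real.volume_Ioo]
      have hconst : IntegrableOn (fun _ : ℝ => (2:ℝ)) (Ioo 0 1) :=
        integrableOn_const hvol.ne
      have hle := setIntegral_mono_on hconst (hφL2 k) hms (fun y hy => (h y hy).le)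
      rw [hnorm1 k, setIntegral_const] at hle
      rw [Real.volume_real_Ioo] at hle
      norm_num at hle
    have h1 := hFTCk k y hy x hx
    have h2 : |∫ t in y..x, 2 * ((starRingEnd ℂ) (φ k t) * D k t).re|
        ≤ ∫ t in Ioo (0:ℝ) 1, |2 * ((starRingEnd ℂ) (φ k t) * D k t).re| := by
      have hIoc : Ioc (min y x) (max y x) ⊆ Ioo (0:ℝ) 1 := by
        intro t ht
        constructor
        · exact lt_trans (lt_min hy.1 hx.1) ht.1
        · exact lt_of_le_of_lt ht.2 (max_lt hy.2 hx.2)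
      calc |∫ t in y..x, 2 * ((starRingEnd ℂ) (φ k t) * D k t).re|
          ≤ ∫ t in Ioc (min y x) (max y x),
              |2 * ((starRingEnd ℂ) (φ k t) * D k t).re| := by
            have := intervalIntegral.norm_integral_le_integral_norm_uIoc
              (f := fun t => 2 * ((starRingEnd ℂ) (φ k t) * D k t).re) (a := y) (b := x)
              (μ := volume)
            simp only [Real.norm_eq_abs, Set.uIoc] at this
            exact this
        _ ≤ ∫ t in Ioo (0:ℝ) 1, |2 * ((starRingEnd ℂ) (φ k t) * D k t).re| := by
            refine setIntegral_mono_set (hre_i k).abs ?_ (HasSubset.Subset.eventuallyLE hIoc)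
            filter_upwards with t using abs_nonneg _
    have h3 : ∫ t in Ioo (0:ℝ) 1, |2 * ((starRingEnd ℂ) (φ k t) * D k t).re|
        ≤ 1 + E k := by
      have hmono : ∫ t in Ioo (0:ℝ) 1, |2 * ((starRingEnd ℂ) (φ k t) * D k t).re|
          ≤ ∫ t in Ioo (0:ℝ) 1, (‖φ k t‖ ^ 2 + ‖D k t‖ ^ 2) :=
        integral_mono (hre_i k).abs ((hφL2 k).add (hDL2 k))
          (fun t => le_trans (hptb k t) (hptb2 k t))
      rwa [integral_add (hφL2 k) (hDL2 k), hnorm1 k] at hmono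
    have h4 : ‖φ k x‖ ^ 2 - ‖φ k y‖ ^ 2 ≤ 1 + E k := by
      rw [h1]
      exact le_trans (le_abs_self _) (le_trans h2 h3)
    linarith
  -- summability of the density at points of Ioo
  have hsummx : ∀ x ∈ Ioo (0:ℝ) 1, Summable (fun k => ρ k * ‖φ k x‖ ^ 2) := by
    intro x hx
    have hdom : Summable (fun k => 3 * ρ k + ρ k * E k) := (hsum.mul_left 3).add hE
    refine Summable.of_nonneg_of_le
      (fun k => mul_nonneg (hρ k) (by positivity)) (fun k => ?_) hdom
    calc ρ k * ‖φ k x‖ ^ 2 ≤ ρ k * (3 + E k) :=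
          mul_le_mul_of_nonneg_left (hφbd k x hx) (hρ k)
      _ = 3 * ρ k + ρ k * E k := by ring
  -- Part 2
  have hpart2le : ∀ a ∈ Ioo (0:ℝ) 1, ∀ b ∈ Ioo (0:ℝ) 1, a ≤ b →
      localDensity ρ φ b - localDensity ρ φ a = ∫ x in a..b, localDensityDeriv ρ φ D x := by
    intro a ha b hb hab
    have hIoc : Ioc a b ⊆ Ioo (0:ℝ) 1 :=
      fun x hx => ⟨lt_trans ha.1 hx.1, lt_of_le_of_lt hx.2 hb.2⟩
    have hrle : volume.restrict (Ioc a b) ≤ μ := by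
      rw [hμdef]; exact Measure.restrict_mono hIoc le_rfl
    have hswap : ∫ x in Ioc a b, localDensityDeriv ρ φ D x = ∑' k, ∫ x in Ioc a b, f k x := by
      have := integral_tsum (μ := volume.restrict (Ioc a b)) (f := f)
        (fun k => (hfi k).aestronglyMeasurable.mono_measure hrle) ?_
      · rw [← this]
        exact integral_congr_ae (Filter.Eventually.of_forall fun x => hg x)
      · refine ne_top_of_le_ne_top hne (ENNReal.tsum_le_tsum fun k => ?_)
        exact lintegral_mono' hrle le_rfl
    have hterm : ∀ k, ρ k * ‖φ k b‖ ^ 2 - ρ k * ‖φ k a‖ ^ 2 = ∫ x in Ioc a b, f k x := by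
      intro k
      rw [← intervalIntegral.integral_of_le hab]
      have : ∫ x in a..b, f k x
          = ρ k * ∫ x in a..b, 2 * ((starRingEnd ℂ) (φ k x) * D k x).re := by
        simp only [hfdef]
        exact intervalIntegral.integral_const_mul _ _
      rw [this, ← hFTCk k a ha b hb]
      ring
    calc localDensity ρ φ b - localDensity ρ φ a
        = ∑' k, (ρ k * ‖φ k b‖ ^ 2 - ρ k * ‖φ k a‖ ^ 2) :=
          (Summable.tsum_sub (hsummx b hb) (hsummx a ha)).symm
      _ = ∑' k, ∫ x in Ioc a b, f k x := tsum_congr hterm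
      _ = ∫ x in Ioc a b, localDensityDeriv ρ φ D x := hswap.symm
      _ = ∫ x in a..b, localDensityDeriv ρ φ D x :=
          (intervalIntegral.integral_of_le hab).symm
  have hpart2 : ∀ a ∈ Ioo (0:ℝ) 1, ∀ b ∈ Ioo (0:ℝ) 1,
      localDensity ρ φ b - localDensity ρ φ a = ∫ x in a..b, localDensityDeriv ρ φ D x := by
    intro a ha b hb
    rcases le_total a b with hab | hab
    · exact hpart2le a ha b hb hab
    · have h := hpart2le b hb a ha hab
      rw [intervalIntegral.integral_symm]
      linarith
  -- Part 3
  have habs : (∫ x in Ioo (0:ℝ) 1, |localDensityDeriv ρ φ D x|)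
      ≤ ∑' k, 2 * ρ k * Real.sqrt (E k) := by
    have hgabs : AEStronglyMeasurable (fun x => |localDensityDeriv ρ φ D x|) μ := by
      simpa [Real.norm_eq_abs] using hgm.norm
    have h0 : ∫ x, |localDensityDeriv ρ φ D x| ∂μ
        = (∫⁻ x, ENNReal.ofReal |localDensityDeriv ρ φ D x| ∂μ).toReal :=
      integral_eq_lintegral_of_nonneg_ae
        (Filter.Eventually.of_forall fun x => abs_nonneg _) hgabs
    have h1 : ∫⁻ x, ENNReal.ofReal |localDensityDeriv ρ φ D x| ∂μ
        ≤ ENNReal.ofReal (∑' k, 2 * ρ k * Real.sqrt (E k)) := by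
      calc ∫⁻ x, ENNReal.ofReal |localDensityDeriv ρ φ D x| ∂μ
          = ∫⁻ x, (‖localDensityDeriv ρ φ D x‖₊ : ENNReal) ∂μ := by
            apply lintegral_congr
            intro x
            rw [← enorm_eq_nnnorm, ← ofReal_norm_eq_enorm, Real.norm_eq_abs]
        _ ≤ ∫⁻ x, ∑' k, (‖f k x‖₊ : ENNReal) ∂μ := lintegral_mono hpt
        _ = ∑' k, ∫⁻ x, (‖f k x‖₊ : ENNReal) ∂μ := lintegral_tsum hnn_meas
        _ ≤ ENNReal.ofReal (∑' k, 2 * ρ k * Real.sqrt (E k)) := htop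
    rw [h0]
    calc (∫⁻ x, ENNReal.ofReal |localDensityDeriv ρ φ D x| ∂μ).toReal
        ≤ (ENNReal.ofReal (∑' k, 2 * ρ k * Real.sqrt (E k))).toReal :=
          ENNReal.toReal_mono ENNReal.ofReal_ne_top h1
      _ = ∑' k, 2 * ρ k * Real.sqrt (E k) := ENNReal.toReal_ofReal hc0
  have hfinal : ∑' k, 2 * ρ k * Real.sqrt (E k)
      ≤ 2 * Real.sqrt (∑' k, ρ k) * Real.sqrt (∑' k, ρ k * E k) := by
    have hsq1 : Summable (fun k => Real.sqrt (ρ k) ^ 2) := by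
      refine hsum.congr fun k => ?_
      rw [Real.sq_sqrt (hρ k)]
    have hsq2 : Summable (fun k => Real.sqrt (ρ k * E k) ^ 2) := by
      refine hE.congr fun k => ?_
      rw [Real.sq_sqrt (mul_nonneg (hρ k) (hE0 k))]
    have hCS := aux_tsum_CS (fun k => Real.sqrt (ρ k)) (fun k => Real.sqrt (ρ k * E k))
      (fun k => Real.sqrt_nonneg _) (fun k => Real.sqrt_nonneg _) hsq1 hsq2
    have he1 : ∑' k, Real.sqrt (ρ k) ^ 2 = ∑' k, ρ k :=
      tsum_congr fun k => Real.sq_sqrt (hρ k)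
    have he2 : ∑' k, Real.sqrt (ρ k * E k) ^ 2 = ∑' k, ρ k * E k :=
      tsum_congr fun k => Real.sq_sqrt (mul_nonneg (hρ k) (hE0 k))
    rw [he1, he2] at hCS
    calc ∑' k, 2 * ρ k * Real.sqrt (E k)
        = 2 * ∑' k, Real.sqrt (ρ k) * Real.sqrt (ρ k * E k) := by
          rw [← tsum_mul_left]
          exact tsum_congr fun k => hceq k
      _ ≤ 2 * (Real.sqrt (∑' k, ρ k) * Real.sqrt (∑' k, ρ k * E k)) := by
          exact mul_le_mul_of_nonneg_left hCS (by norm_num)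
      _ = 2 * Real.sqrt (∑' k, ρ k) * Real.sqrt (∑' k, ρ k * E k) := by ring
  exact ⟨hgint, hpart2, le_trans habs hfinal⟩
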